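/- arXiv:cond-mat/0701651 — 3 statements merged into one kernel-verified Lean document; each statement's English description precedes it below -/
import Mathlib

section
/- For q > 0, λ > 0, and 0 < γ < 1, the integral I(λ) = ∫₀^∞ (q t/(λ+t)^γ) exp(-q t/(λ+t)^γ) dt is finite and satisfies I(λ)/λ^γ → 1/q as λ → ∞. -/
open MeasureTheory Real Set Filter

lemma pow_div_fact_le_exp (x : ℝ) (hx : 0 ≤ x) (n : ℕ) : x ^ n / n.factorial ≤ Real.exp x :=
  calc x ^ n / n.factorial ≤ ∑ i ∈ Finset.range (n+1), x ^ i / i.factorial :=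
        Finset.single_le_sum (f := fun i => x ^ i / (i.factorial : ℝ))
          (fun i _ => by positivity) (Finset.self_mem_range_succ n)
    _ ≤ Real.exp x := Real.sum_le_exp_of_nonneg hx _

lemma lemB {c p : ℝ} (hc : 0 < c) (hp : 0 < p) :
    IntegrableOn (fun u : ℝ => u * Real.exp (-(c * u ^ p))) (Set.Ioi 1) := by
  set n : ℕ := ⌈3 / p⌉₊ with hn
  have hnp : 3 ≤ (n : ℝ) * p := by
    rw [← div_le_iff₀ hp]
    exact Nat.le_ceil _
  have hmeas : AEStronglyMeasurable (fun u : ℝ => u * Real.exp (-(c * u ^ p)))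
      (volume.restrict (Set.Ioi 1)) := by
    apply Measurable.aestronglyMeasurable
    fun_prop
  refine Integrable.mono
    (g := fun u : ℝ => (n.factorial / c ^ n) * u ^ (1 - (n : ℝ) * p))
    (((integrableOn_Ioi_rpow_of_lt (by linarith) one_pos).const_mul _)) hmeas ?_
  filter_upwards [ae_restrict_mem measurableSet_Ioi] with u hu
  have hu1 : (1:ℝ) < u := hu
  have hu0 : (0:ℝ) < u := by linarith
  have hup : 0 < u ^ p := rpow_pos_of_pos hu0 p
  have hx : 0 < c * u ^ p := by positivity
  have hexp : Real.exp (-(c * u ^ p)) ≤ n.factorial / (c * u ^ p) ^ n := by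
    rw [Real.exp_neg]
    rw [inv_le_comm₀ (Real.exp_pos _) (by positivity)] at *
    calc ((n.factorial : ℝ) / (c * u ^ p) ^ n)⁻¹ = (c * u ^ p) ^ n / n.factorial := by
          rw [inv_div]
      _ ≤ Real.exp (c * u ^ p) := pow_div_fact_le_exp _ hx.le _
  rw [Real.norm_eq_abs, Real.norm_eq_abs, abs_of_nonneg (by positivity),
    abs_of_nonneg (by positivity)]
  calc u * Real.exp (-(c * u ^ p)) ≤ u * (n.factorial / (c * u ^ p) ^ n) := by
        exact mul_le_mul_of_nonneg_left hexp hu0.le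
    _ = (n.factorial / c ^ n) * u ^ (1 - (n : ℝ) * p) := by
        rw [mul_pow, ← Real.rpow_natCast (u ^ p) n, ← Real.rpow_mul hu0.le,
          Real.rpow_sub hu0, Real.rpow_one, mul_comm p n]
        field_simp

lemma lemA {b γ : ℝ} (hb : 0 < b) (hγ0 : 0 < γ) (hγ1 : γ < 1) :
    IntegrableOn (fun u : ℝ => u * Real.exp (-(b * u / (1 + u) ^ γ))) (Set.Ioi 0) := by
  have hmeas : ∀ s : Set ℝ, AEStronglyMeasurable (fun u : ℝ => u * Real.exp (-(b * u / (1 + u) ^ γ)))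
      (volume.restrict s) := by
    intro s
    apply Measurable.aestronglyMeasurable
    fun_prop
  rw [← Set.Ioc_union_Ioi_eq_Ioi (zero_le_one (α := ℝ)), integrableOn_union]
  constructor
  · refine Integrable.mono (g := fun _ : ℝ => (1:ℝ))
      ((integrableOn_const_iff (C := (1:ℝ))).mpr (Or.inr measure_Ioc_lt_top)) (hmeas _) ?_
    filter_upwards [ae_restrict_mem measurableSet_Ioc] with u hu
    have h1 : 0 < u := hu.1
    have h2 : u ≤ 1 := hu.2
    have hp : (0:ℝ) < (1 + u) ^ γ := rpow_pos_of_pos (by linarith) _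
    rw [Real.norm_eq_abs, Real.norm_eq_abs, abs_of_nonneg (by positivity), abs_one]
    calc u * Real.exp (-(b * u / (1 + u) ^ γ)) ≤ 1 * 1 := by
          apply mul_le_mul h2 (Real.exp_le_one_iff.mpr (neg_nonpos.mpr (by positivity)))
            (Real.exp_pos _).le one_pos.le
      _ = 1 := mul_one 1
  · refine Integrable.mono (g := fun u : ℝ => u * Real.exp (-(b / 2 ^ γ * u ^ (1 - γ))))
      (lemB (by positivity) (by linarith)) (hmeas _) ?_
    filter_upwards [ae_restrict_mem measurableSet_Ioi] with u hu
    have h1 : (1:ℝ) < u := hu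
    have h0 : (0:ℝ) < u := by linarith
    have hp : (0:ℝ) < (1 + u) ^ γ := rpow_pos_of_pos (by linarith) _
    have key : b / 2 ^ γ * u ^ (1 - γ) ≤ b * u / (1 + u) ^ γ := by
      have h2u : (1 + u) ^ γ ≤ (2 * u) ^ γ := by
        apply Real.rpow_le_rpow (by linarith) (by linarith) hγ0.le
      have h2u' : (2 * u : ℝ) ^ γ = 2 ^ γ * u ^ γ := Real.mul_rpow (by norm_num) h0.le
      rw [div_mul_eq_mul_div, div_le_div_iff₀ (by positivity) hp]
      calc b * u ^ (1 - γ) * (1 + u) ^ γ ≤ b * u ^ (1 - γ) * (2 ^ γ * u ^ γ) := by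
            apply mul_le_mul_of_nonneg_left (h2u.trans_eq h2u') (by positivity)
        _ = b * u * 2 ^ γ := by
            rw [show b * u ^ (1-γ) * (2 ^ γ * u ^ γ) = b * (u ^ (1-γ) * u ^ γ) * 2 ^ γ by ring,
              ← Real.rpow_add h0]
            norm_num
    rw [Real.norm_eq_abs, Real.norm_eq_abs, abs_of_nonneg (by positivity),
      abs_of_nonneg (by positivity)]
    exact mul_le_mul_of_nonneg_left (Real.exp_le_exp.mpr (by linarith)) h0.le

/-- The Laplace-type integral `I(λ) = ∫₀^∞ (qt/(λ+t)^γ) e^{-qt/(λ+t)^γ} dt` is finite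
for every `λ > 0` and satisfies `I(λ)/λ^γ → 1/q` as `λ → ∞`. -/
theorem stmt_9 (q γ : ℝ) (hq : 0 < q) (hγ0 : 0 < γ) (hγ1 : γ < 1) :
    (∀ lam : ℝ, 0 < lam →
      IntegrableOn
        (fun t => (q * t / (lam + t) ^ γ) * Real.exp (-(q * t / (lam + t) ^ γ)))
        (Set.Ioi 0) volume) ∧
    Filter.Tendsto
      (fun lam : ℝ =>
        (∫ t in Set.Ioi (0 : ℝ),
          (q * t / (lam + t) ^ γ) * Real.exp (-(q * t / (lam + t) ^ γ))) / lam ^ γ)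
      Filter.atTop (nhds (1 / q)) := by
  -- rescaled integrand
  set H : ℝ → ℝ → ℝ := fun a u =>
    (q * u / (1 + a * u) ^ γ) * Real.exp (-(q * u / (1 + a * u) ^ γ)) with hH
  -- substitution identity
  have eqf : ∀ lam : ℝ, 0 < lam → ∀ u : ℝ, 0 < u →
      (q * (lam ^ γ * u) / (lam + lam ^ γ * u) ^ γ) *
        Real.exp (-(q * (lam ^ γ * u) / (lam + lam ^ γ * u) ^ γ)) = H (lam ^ (γ - 1)) u := by
    intro lam hlam u hu
    have hsplit : lam + lam ^ γ * u = lam * (1 + lam ^ (γ - 1) * u) := by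
      have : lam * lam ^ (γ - 1) = lam ^ γ := by
        rw [show lam * lam ^ (γ - 1) = lam ^ (1:ℝ) * lam ^ (γ - 1) by rw [Real.rpow_one],
          ← Real.rpow_add hlam]
        norm_num
      rw [mul_add, mul_one, ← mul_assoc, this]
    have ha : 0 < lam ^ (γ - 1) := Real.rpow_pos_of_pos hlam _
    have h1au : (0:ℝ) < 1 + lam ^ (γ - 1) * u := by positivity
    have hpow : (lam + lam ^ γ * u) ^ γ = lam ^ γ * (1 + lam ^ (γ - 1) * u) ^ γ := by
      rw [hsplit, Real.mul_rpow hlam.le h1au.le]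
    have hlg : (0:ℝ) < lam ^ γ := Real.rpow_pos_of_pos hlam _
    have harg : q * (lam ^ γ * u) / (lam + lam ^ γ * u) ^ γ
        = q * u / (1 + lam ^ (γ - 1) * u) ^ γ := by
      rw [hpow]
      field_simp
    rw [harg, hH]
  -- bound : H a u ≤ q * (u * exp(-(q/C * u/(1+u)^γ))) whenever (1+a)^γ ≤ C
  have hbound : ∀ a u C : ℝ, 0 < a → 0 < u → (1 + a) ^ γ ≤ C →
      H a u ≤ q * (u * Real.exp (-(q / C * u / (1 + u) ^ γ))) := by
    intro a u C ha hu hC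
    have h1au : (0:ℝ) < 1 + a * u := by positivity
    have hr : (0:ℝ) < (1 + a * u) ^ γ := Real.rpow_pos_of_pos h1au _
    have hr1 : (1:ℝ) ≤ (1 + a * u) ^ γ := by
      calc (1:ℝ) = 1 ^ γ := (Real.one_rpow γ).symm
        _ ≤ (1 + a * u) ^ γ := Real.rpow_le_rpow zero_le_one (by nlinarith) hγ0.le
    have h1u : (0:ℝ) < (1 + u) ^ γ := Real.rpow_pos_of_pos (by positivity) _
    have hC0 : (0:ℝ) < C := lt_of_lt_of_le (Real.rpow_pos_of_pos (by positivity) _) hC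
    have hxle : q * u / (1 + a * u) ^ γ ≤ q * u := by
      rw [div_le_iff₀ hr]
      nlinarith [mul_pos hq hu]
    have hyle : q / C * u / (1 + u) ^ γ ≤ q * u / (1 + a * u) ^ γ := by
      have hprod : (1 + a * u) ^ γ ≤ C * (1 + u) ^ γ := by
        calc (1 + a * u) ^ γ ≤ ((1 + a) * (1 + u)) ^ γ := by
              apply Real.rpow_le_rpow h1au.le (by nlinarith) hγ0.le
          _ = (1 + a) ^ γ * (1 + u) ^ γ := Real.mul_rpow (by positivity) (by positivity)
          _ ≤ C * (1 + u) ^ γ := mul_le_mul_of_nonneg_right hC h1u.le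
      rw [div_le_div_iff₀ (by positivity) hr]
      calc q / C * u * (1 + a * u) ^ γ ≤ q / C * u * (C * (1 + u) ^ γ) := by
            apply mul_le_mul_of_nonneg_left hprod (by positivity)
        _ = q * u * (1 + u) ^ γ := by field_simp
    calc H a u ≤ (q * u) * Real.exp (-(q / C * u / (1 + u) ^ γ)) := by
          apply mul_le_mul hxle (Real.exp_le_exp.mpr (by linarith)) (Real.exp_pos _).le
            (by positivity)
      _ = q * (u * Real.exp (-(q / C * u / (1 + u) ^ γ))) := by ring
  -- measurability of H a on restrictions
  have hHmeas : ∀ a : ℝ, ∀ s : Set ℝ,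
      AEStronglyMeasurable (H a) (volume.restrict s) := by
    intro a s
    apply Measurable.aestronglyMeasurable
    rw [hH]
    fun_prop
  -- integrability of H a for a > 0
  have hHint : ∀ a : ℝ, 0 < a → IntegrableOn (H a) (Set.Ioi 0) := by
    intro a ha
    have hC : (0:ℝ) < (1 + a) ^ γ := Real.rpow_pos_of_pos (by positivity) _
    refine Integrable.mono
      (g := fun u : ℝ => q * (u * Real.exp (-(q / (1 + a) ^ γ * u / (1 + u) ^ γ))))
      ((lemA (by positivity) hγ0 hγ1).const_mul q) (hHmeas a _) ?_
    filter_upwards [ae_restrict_mem measurableSet_Ioi] with u hu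
    have hu0 : (0:ℝ) < u := hu
    have h1au : (0:ℝ) < 1 + a * u := by positivity
    have hr : (0:ℝ) < (1 + a * u) ^ γ := Real.rpow_pos_of_pos h1au _
    rw [Real.norm_eq_abs, Real.norm_eq_abs, abs_of_nonneg (by rw [hH]; positivity),
      abs_of_nonneg (by positivity)]
    exact hbound a u ((1 + a) ^ γ) ha hu0 le_rfl
  constructor
  · -- Part 1 : integrability
    intro lam hlam
    have hlg : (0:ℝ) < lam ^ γ := Real.rpow_pos_of_pos hlam _
    have key := (integrableOn_Ioi_comp_mul_left_iff
      (fun t => (q * t / (lam + t) ^ γ) * Real.exp (-(q * t / (lam + t) ^ γ))) 0 hlg)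
    rw [mul_zero] at key
    rw [← key]
    refine (hHint (lam ^ (γ - 1)) (Real.rpow_pos_of_pos hlam _)).congr_fun ?_ measurableSet_Ioi
    intro u hu
    exact (eqf lam hlam u hu).symm
  · -- Part 2 : asymptotics
    have hlim0 : Tendsto (fun lam : ℝ => lam ^ (γ - 1)) atTop (nhds 0) := by
      have := tendsto_rpow_neg_atTop (y := 1 - γ) (by linarith)
      simpa [neg_sub] using this
    -- dominated convergence
    have hDCT : Tendsto (fun lam : ℝ => ∫ u in Set.Ioi (0:ℝ), H (lam ^ (γ - 1)) u)
        atTop (nhds (∫ u in Set.Ioi (0:ℝ), (q * u) * Real.exp (-(q * u)))) := by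
      apply tendsto_integral_filter_of_dominated_convergence
        (bound := fun u : ℝ => q * (u * Real.exp (-(q / 2 ^ γ * u / (1 + u) ^ γ))))
      · exact Filter.Eventually.of_forall fun lam => hHmeas _ _
      · filter_upwards [Filter.eventually_ge_atTop (1:ℝ)] with lam hlam
        filter_upwards [ae_restrict_mem measurableSet_Ioi] with u hu
        have hu0 : (0:ℝ) < u := hu
        have ha : (0:ℝ) < lam ^ (γ - 1) := Real.rpow_pos_of_pos (by linarith) _
        have ha1 : lam ^ (γ - 1) ≤ 1 :=
          Real.rpow_le_one_of_one_le_of_nonpos hlam (by linarith)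
        have hC : (1 + lam ^ (γ - 1)) ^ γ ≤ 2 ^ γ :=
          Real.rpow_le_rpow (by positivity) (by linarith) hγ0.le
        rw [Real.norm_eq_abs, abs_of_nonneg (by rw [hH]; positivity)]
        exact hbound _ u (2 ^ γ) ha hu0 hC
      · exact (lemA (b := q / 2 ^ γ) (by positivity) hγ0 hγ1).const_mul q
      · filter_upwards [ae_restrict_mem measurableSet_Ioi] with u hu
        have hu0 : (0:ℝ) < u := hu
        have hcont : ContinuousAt
            (fun a : ℝ => (q * u / (1 + a * u) ^ γ) * Real.exp (-(q * u / (1 + a * u) ^ γ))) 0 := by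
          have h1 : ContinuousAt (fun a : ℝ => (1 + a * u) ^ γ) 0 := by
            apply ContinuousAt.rpow_const (by fun_prop)
            left
            simp
          have h2 : ContinuousAt (fun a : ℝ => q * u / (1 + a * u) ^ γ) 0 := by
            apply ContinuousAt.div continuousAt_const h1
            simp
          exact h2.mul (Real.continuous_exp.continuousAt.comp h2.neg)
        have htend := hcont.tendsto.comp hlim0
        simp only [Function.comp_def, zero_mul, add_zero, Real.one_rpow, div_one] at htend
        exact htend
    -- value of the limit integral
    have hintval : (∫ u in Set.Ioi (0:ℝ), (q * u) * Real.exp (-(q * u))) = 1 / q := by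
      have hsub := integral_comp_mul_left_Ioi (fun x : ℝ => x * Real.exp (-x)) 0 hq
      rw [mul_zero] at hsub
      have hgamma : (∫ x in Set.Ioi (0:ℝ), x * Real.exp (-x)) = 1 := by
        have h2 := Real.Gamma_eq_integral (by norm_num : (0:ℝ) < 2)
        rw [Real.Gamma_two] at h2
        rw [h2]
        apply setIntegral_congr_fun measurableSet_Ioi
        intro x hx
        show x * Real.exp (-x) = Real.exp (-x) * x ^ ((2:ℝ) - 1)
        rw [show ((2:ℝ) - 1) = 1 by norm_num, Real.rpow_one, mul_comm]
      rw [hsub, hgamma, smul_eq_mul, mul_one, one_div]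
    rw [← hintval]
    -- identify the rescaled integral with the original one
    apply Tendsto.congr' _ hDCT
    filter_upwards [Filter.eventually_gt_atTop (0:ℝ)] with lam hlam
    have hlg : (0:ℝ) < lam ^ γ := Real.rpow_pos_of_pos hlam _
    have hsub := integral_comp_mul_left_Ioi
      (fun t => (q * t / (lam + t) ^ γ) * Real.exp (-(q * t / (lam + t) ^ γ))) 0 hlg
    rw [mul_zero] at hsub
    have heq : (∫ u in Set.Ioi (0:ℝ), H (lam ^ (γ - 1)) u)
        = ∫ u in Set.Ioi (0:ℝ),
          (q * (lam ^ γ * u) / (lam + lam ^ γ * u) ^ γ) *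
            Real.exp (-(q * (lam ^ γ * u) / (lam + lam ^ γ * u) ^ γ)) := by
      apply setIntegral_congr_fun measurableSet_Ioi
      intro u hu
      exact (eqf lam hlam u hu).symm
    rw [heq, hsub, smul_eq_mul, div_eq_inv_mul]
end

section
/- For q > 0, λ > 0, and 0 < γ < 1, J(λ) = ∫₀^∞ (q t/(λ+t)^γ) exp(-q t/λ^γ) dt is finite and J(λ)/λ^γ → 1/q as λ → ∞. -/
open MeasureTheory Real Set Filter

private lemma aux_int_texp (c : ℝ) (hc : 0 < c) :
    IntegrableOn (fun t : ℝ => t * Real.exp (-(c * t))) (Set.Ioi 0) volume := by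
  have h1 : IntegrableOn (fun x : ℝ => Real.exp (-x) * x ^ ((2:ℝ) - 1)) (Set.Ioi 0) volume :=
    Real.GammaIntegral_convergent (by norm_num)
  have h1' : IntegrableOn (fun x : ℝ => x * Real.exp (-x)) (Set.Ioi 0) volume := by
    refine h1.congr_fun (fun x hx => ?_) measurableSet_Ioi
    rw [show (2:ℝ) - 1 = 1 by norm_num]; beta_reduce; rw [Real.rpow_one]; ring
  have h2 : IntegrableOn (fun x : ℝ => (c * x) * Real.exp (-(c * x))) (Set.Ioi 0) volume := by
    have := (integrableOn_Ioi_comp_mul_left_iff (fun x : ℝ => x * Real.exp (-x)) 0 hc).mpr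
      (by simpa using h1')
    simpa using this
  have h3 : IntegrableOn (fun x : ℝ => c⁻¹ * ((c * x) * Real.exp (-(c * x))))
      (Set.Ioi 0) volume := h2.const_mul c⁻¹
  refine h3.congr_fun (fun x hx => ?_) measurableSet_Ioi
  field_simp

private lemma aux_cont (γ lam : ℝ) (hγ0 : 0 < γ) :
    Continuous fun t : ℝ => (lam + t) ^ γ :=
  (continuous_const.add continuous_id).rpow_const (fun t => Or.inr hγ0.le)

private lemma aux_integrable (q γ : ℝ) (hq : 0 < q) (hγ0 : 0 < γ) (lam : ℝ) (hlam : 0 < lam) :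
    IntegrableOn
      (fun t => (q * t / (lam + t) ^ γ) * Real.exp (-(q * t / lam ^ γ)))
      (Set.Ioi 0) volume := by
  have hL : (0:ℝ) < lam ^ γ := Real.rpow_pos_of_pos hlam γ
  set c : ℝ := q / lam ^ γ with hc
  have hcpos : 0 < c := by positivity
  have hbound := (aux_int_texp c hcpos).const_mul c
  refine Integrable.mono' hbound ?_ ?_
  · refine ContinuousOn.aestronglyMeasurable ?_ measurableSet_Ioi
    refine ContinuousOn.mul ?_ ?_
    · refine ContinuousOn.div (by fun_prop) (aux_cont γ lam hγ0).continuousOn ?_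
      intro t ht
      have : 0 < lam + t := by have := mem_Ioi.mp ht; linarith
      positivity
    · fun_prop
  · filter_upwards [ae_restrict_mem measurableSet_Ioi] with t ht
    have ht0 : 0 < t := mem_Ioi.mp ht
    have h1 : 0 < lam + t := by linarith
    have h2 : lam ^ γ ≤ (lam + t) ^ γ :=
      Real.rpow_le_rpow hlam.le (by linarith) hγ0.le
    have hfpos : 0 ≤ (q * t / (lam + t) ^ γ) * Real.exp (-(q * t / lam ^ γ)) := by
      positivity
    rw [Real.norm_eq_abs, abs_of_nonneg hfpos]
    have harg : q * t / lam ^ γ = c * t := by rw [hc]; ring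
    have hle : q * t / (lam + t) ^ γ ≤ q * t / lam ^ γ := by
      gcongr
    calc (q * t / (lam + t) ^ γ) * Real.exp (-(q * t / lam ^ γ))
        ≤ (q * t / lam ^ γ) * Real.exp (-(q * t / lam ^ γ)) := by
          gcongr
      _ = c * (t * Real.exp (-(c * t))) := by rw [harg, hc]; ring

private lemma aux_gamma_int : (∫ s in Set.Ioi (0:ℝ), s * Real.exp (-s)) = 1 := by
  have h := Real.Gamma_eq_integral (by norm_num : (0:ℝ) < 2)
  have hfun : (fun s : ℝ => s * Real.exp (-s)) = fun x : ℝ => Real.exp (-x) * x ^ ((2:ℝ) - 1) := by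
    funext x
    rw [show (2:ℝ) - 1 = 1 by norm_num, Real.rpow_one]
    ring
  rw [hfun, ← h, Real.Gamma_two]

/-- The lower-bound companion integral `J(λ) = ∫₀^∞ (qt/(λ+t)^γ) e^{-qt/λ^γ} dt` is
finite and `J(λ)/λ^γ → 1/q` as `λ → ∞`. -/
theorem stmt_10 (q γ : ℝ) (hq : 0 < q) (hγ0 : 0 < γ) (hγ1 : γ < 1) :
    (∀ lam : ℝ, 0 < lam →
      IntegrableOn
        (fun t => (q * t / (lam + t) ^ γ) * Real.exp (-(q * t / lam ^ γ)))
        (Set.Ioi 0) volume) ∧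
    Filter.Tendsto
      (fun lam : ℝ =>
        (∫ t in Set.Ioi (0 : ℝ),
          (q * t / (lam + t) ^ γ) * Real.exp (-(q * t / lam ^ γ))) / lam ^ γ)
      Filter.atTop (nhds (1 / q)) := by
  refine ⟨aux_integrable q γ hq hγ0, ?_⟩
  have hDCT : Tendsto
      (fun lam : ℝ => ∫ s in Set.Ioi (0:ℝ),
        lam ^ γ * s / (lam + lam ^ γ * s / q) ^ γ * Real.exp (-s))
      atTop (nhds (∫ s in Set.Ioi (0:ℝ), s * Real.exp (-s))) := by
    refine tendsto_integral_filter_of_dominated_convergence (fun s => s * Real.exp (-s))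
      ?_ ?_ ?_ ?_
    · -- measurability
      filter_upwards [eventually_gt_atTop (0:ℝ)] with lam hlam
      refine ContinuousOn.aestronglyMeasurable ?_ measurableSet_Ioi
      have hL : (0:ℝ) < lam ^ γ := Real.rpow_pos_of_pos hlam γ
      refine ContinuousOn.mul (ContinuousOn.div (by fun_prop) ?_ ?_) (by fun_prop)
      · exact (Continuous.rpow_const (by fun_prop) (fun _ => Or.inr hγ0.le)).continuousOn
      · intro s hs
        have hs0 : 0 < s := mem_Ioi.mp hs
        have hD : 0 < lam + lam ^ γ * s / q := by positivity
        positivity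
    · -- bound
      filter_upwards [eventually_gt_atTop (0:ℝ)] with lam hlam
      filter_upwards [ae_restrict_mem measurableSet_Ioi] with s hs
      have hs0 : 0 < s := mem_Ioi.mp hs
      have hL : (0:ℝ) < lam ^ γ := Real.rpow_pos_of_pos hlam γ
      have hD : 0 < lam + lam ^ γ * s / q := by positivity
      have hDγ : lam ^ γ ≤ (lam + lam ^ γ * s / q) ^ γ := by
        refine Real.rpow_le_rpow hlam.le ?_ hγ0.le
        have : 0 ≤ lam ^ γ * s / q := by positivity
        linarith
      have hDγ0 : 0 < (lam + lam ^ γ * s / q) ^ γ := Real.rpow_pos_of_pos hD γ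
      have hF0 : 0 ≤ lam ^ γ * s / (lam + lam ^ γ * s / q) ^ γ * Real.exp (-s) := by
        positivity
      rw [Real.norm_eq_abs, abs_of_nonneg hF0]
      have hle : lam ^ γ * s / (lam + lam ^ γ * s / q) ^ γ ≤ s := by
        rw [div_le_iff₀ hDγ0]
        calc lam ^ γ * s ≤ (lam + lam ^ γ * s / q) ^ γ * s :=
              mul_le_mul_of_nonneg_right hDγ hs0.le
          _ = s * (lam + lam ^ γ * s / q) ^ γ := mul_comm _ _
      exact mul_le_mul_of_nonneg_right hle (Real.exp_nonneg _)
    · -- bound integrable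
      refine (aux_int_texp 1 one_pos).congr_fun (fun t ht => ?_) measurableSet_Ioi
      simp
    · -- pointwise limit
      filter_upwards [ae_restrict_mem measurableSet_Ioi] with s hs
      have hs0 : 0 < s := mem_Ioi.mp hs
      have h1 : Tendsto (fun lam : ℝ => lam ^ (γ - 1) * (s / q)) atTop (nhds 0) := by
        have h := (tendsto_rpow_neg_atTop (by linarith : (0:ℝ) < 1 - γ)).mul_const (s / q)
        rw [zero_mul] at h
        refine h.congr (fun lam => ?_)
        rw [show -(1 - γ) = γ - 1 by ring]
      have h2 : Tendsto (fun lam : ℝ => 1 / (1 + lam ^ (γ - 1) * (s / q))) atTop (nhds 1) := by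
        have h := (tendsto_const_nhds : Tendsto (fun _ : ℝ => (1:ℝ)) atTop (nhds 1)).div
          ((tendsto_const_nhds : Tendsto (fun _ : ℝ => (1:ℝ)) atTop (nhds 1)).add h1)
          (by norm_num : (1:ℝ) + 0 ≠ 0)
        convert h using 2 <;> simp
      have h3 : Tendsto (fun lam : ℝ => (1 / (1 + lam ^ (γ - 1) * (s / q))) ^ γ)
          atTop (nhds 1) := by
        have h := h2.rpow_const (Or.inr hγ0.le)
        simpa using h
      have h4 := h3.mul_const (s * Real.exp (-s))
      rw [one_mul] at h4
      refine Tendsto.congr' ?_ h4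
      filter_upwards [eventually_gt_atTop (0:ℝ)] with lam hlam
      have hL : (0:ℝ) < lam ^ γ := Real.rpow_pos_of_pos hlam γ
      have hD : 0 < lam + lam ^ γ * s / q := by positivity
      have key : 1 / (1 + lam ^ (γ - 1) * (s / q)) = lam / (lam + lam ^ γ * s / q) := by
        have hsub : lam ^ (γ - 1) = lam ^ γ / lam := by
          rw [Real.rpow_sub hlam, Real.rpow_one]
        rw [hsub]
        rw [div_eq_div_iff (by positivity) hD.ne']
        field_simp
      rw [key, Real.div_rpow hlam.le hD.le]
      field_simp
  have hfinal : Tendsto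
      (fun lam : ℝ => (1 / q) * ∫ s in Set.Ioi (0:ℝ),
        lam ^ γ * s / (lam + lam ^ γ * s / q) ^ γ * Real.exp (-s))
      atTop (nhds (1 / q)) := by
    have h := hDCT.const_mul (1 / q)
    rwa [aux_gamma_int, mul_one] at h
  refine Tendsto.congr' ?_ hfinal
  filter_upwards [eventually_gt_atTop (0:ℝ)] with lam hlam
  have hL : (0:ℝ) < lam ^ γ := Real.rpow_pos_of_pos hlam γ
  have hb : (0:ℝ) < lam ^ γ / q := by positivity
  have hsub := integral_comp_mul_left_Ioi
    (fun t => (q * t / (lam + t) ^ γ) * Real.exp (-(q * t / lam ^ γ))) 0 hb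
  rw [mul_zero] at hsub
  have heq : ∀ s : ℝ, (q * ((lam ^ γ / q) * s) / (lam + (lam ^ γ / q) * s) ^ γ)
      * Real.exp (-(q * ((lam ^ γ / q) * s) / lam ^ γ))
      = lam ^ γ * s / (lam + lam ^ γ * s / q) ^ γ * Real.exp (-s) := by
    intro s
    have h1 : q * ((lam ^ γ / q) * s) = lam ^ γ * s := by field_simp
    have h2 : lam ^ γ / q * s = lam ^ γ * s / q := by ring
    have h3 : lam ^ γ * s / lam ^ γ = s := by
      rw [mul_comm, mul_div_assoc, div_self hL.ne', mul_one]
    rw [h1, h2, h3]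
  simp only [heq] at hsub
  rw [hsub, smul_eq_mul]
  field_simp
end

section
/- For q_i > 0, q_{ij} ≥ 0, λ > 0, and 0 < γ < 1, ∫₀^∞ (q_{ij}/(λ+t)^γ) exp(-q_i t/λ^γ) dt → q_{ij}/q_i as λ → ∞. -/
open MeasureTheory Real Set Filter

/-- `∫₀^∞ (q_{ij}/(λ+t)^γ) exp(-q_i t/λ^γ) dt → q_{ij}/q_i` as `λ → ∞`. -/
theorem stmt_11 (qi qij γ : ℝ) (hqi : 0 < qi) (hqij : 0 ≤ qij)
    (hγ0 : 0 < γ) (hγ1 : γ < 1) :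
    Filter.Tendsto
      (fun lam : ℝ =>
        ∫ t in Set.Ioi (0 : ℝ), (qij / (lam + t) ^ γ) * Real.exp (-(qi * t / lam ^ γ)))
      Filter.atTop (nhds (qij / qi)) := by
  -- substituted integrand
  set g : ℝ → ℝ → ℝ := fun lam s =>
    lam ^ γ * ((qij / (lam + lam ^ γ * s) ^ γ) * Real.exp (-(qi * s))) with hg
  -- limit function / bound
  set f : ℝ → ℝ := fun s => qij * Real.exp (-(qi * s)) with hf
  have hf_int : IntegrableOn f (Ioi 0) := by
    have := (exp_neg_integrableOn_Ioi 0 hqi).const_mul qij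
    simpa [hf, neg_mul, IntegrableOn] using this
  have hfval : (∫ s in Ioi (0:ℝ), f s) = qij / qi := by
    have h1 : (∫ s in Ioi (0:ℝ), Real.exp (-(qi * s))) = qi⁻¹ := by
      have := MeasureTheory.integral_comp_mul_left_Ioi (fun x => Real.exp (-x)) 0 hqi
      simp only [mul_zero, smul_eq_mul] at this
      rw [integral_exp_neg_Ioi_zero, mul_one] at this
      exact this
    rw [hf, MeasureTheory.integral_const_mul, h1, div_eq_mul_inv]
  -- DCT for the substituted integrals
  have hmain : Tendsto (fun lam => ∫ s in Ioi (0:ℝ), g lam s) atTop (nhds (qij / qi)) := by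
    rw [← hfval]
    apply MeasureTheory.tendsto_integral_filter_of_dominated_convergence f
    · filter_upwards with lam
      apply Measurable.aestronglyMeasurable
      fun_prop
    · filter_upwards [eventually_ge_atTop (1:ℝ)] with lam hlam
      filter_upwards [ae_restrict_mem measurableSet_Ioi] with s hs
      have hl : (0:ℝ) < lam := lt_of_lt_of_le one_pos hlam
      have hlg : (0:ℝ) < lam ^ γ := Real.rpow_pos_of_pos hl γ
      have hs0 : (0:ℝ) < s := hs
      have hDpos : (0:ℝ) < lam + lam ^ γ * s := by nlinarith
      have hDg : (0:ℝ) < (lam + lam ^ γ * s) ^ γ := Real.rpow_pos_of_pos hDpos γ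
      have hden : lam ^ γ ≤ (lam + lam ^ γ * s) ^ γ :=
        Real.rpow_le_rpow hl.le (by nlinarith) hγ0.le
      have hratio : lam ^ γ / (lam + lam ^ γ * s) ^ γ ≤ 1 :=
        (div_le_one hDg).mpr hden
      have hgval : g lam s = qij * Real.exp (-(qi * s)) * (lam ^ γ / (lam + lam ^ γ * s) ^ γ) := by
        simp only [hg]; ring
      have hgnn : 0 ≤ g lam s := by
        rw [hgval]
        positivity
      rw [Real.norm_eq_abs, abs_of_nonneg hgnn, hgval, hf]
      nlinarith [Real.exp_pos (-(qi * s)), mul_nonneg hqij (Real.exp_pos (-(qi * s))).le]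
    · exact hf_int
    · filter_upwards [ae_restrict_mem measurableSet_Ioi] with s hs
      have hs0 : (0:ℝ) < s := hs
      have hratio : Tendsto (fun lam : ℝ => lam ^ γ / (lam + lam ^ γ * s) ^ γ) atTop (nhds 1) := by
        have h0 : Tendsto (fun lam : ℝ => lam ^ (γ - 1)) atTop (nhds 0) := by
          have := tendsto_rpow_neg_atTop (by linarith : (0:ℝ) < 1 - γ)
          simpa [neg_sub] using this
        have h1 : Tendsto (fun lam : ℝ => 1 + lam ^ (γ - 1) * s) atTop (nhds 1) := by
          have := (tendsto_const_nhds : Tendsto (fun _ : ℝ => (1:ℝ)) atTop (nhds 1)).add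
            (h0.mul_const s)
          simpa using this
        have h2 : Tendsto (fun lam : ℝ => (1 + lam ^ (γ - 1) * s) ^ (-γ)) atTop (nhds 1) := by
          have hc := (Real.continuousAt_rpow_const 1 (-γ) (Or.inl one_ne_zero)).tendsto
          have := hc.comp h1
          simpa [Real.one_rpow, Function.comp_def] using this
        refine h2.congr' ?_
        filter_upwards [eventually_ge_atTop (1:ℝ)] with lam hlam
        have hl : (0:ℝ) < lam := lt_of_lt_of_le one_pos hlam
        have hlg : (0:ℝ) < lam ^ γ := Real.rpow_pos_of_pos hl γ
        have hDpos : (0:ℝ) < lam + lam ^ γ * s := by nlinarith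
        have hbase : 1 + lam ^ (γ - 1) * s = (lam + lam ^ γ * s) / lam := by
          rw [Real.rpow_sub hl, Real.rpow_one]
          field_simp
        rw [hbase, Real.rpow_neg (by positivity), Real.div_rpow hDpos.le hl.le, inv_div]
      have : Tendsto (fun lam : ℝ => qij * Real.exp (-(qi * s)) *
          (lam ^ γ / (lam + lam ^ γ * s) ^ γ)) atTop (nhds (qij * Real.exp (-(qi * s)) * 1)) :=
        tendsto_const_nhds.mul hratio
      rw [mul_one] at this
      refine this.congr (fun lam => ?_)
      simp only [hg]; ring
  -- relate the original integral to the substituted one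
  refine hmain.congr' ?_
  filter_upwards [eventually_ge_atTop (1:ℝ)] with lam hlam
  have hl : (0:ℝ) < lam := lt_of_lt_of_le one_pos hlam
  have hlg : (0:ℝ) < lam ^ γ := Real.rpow_pos_of_pos hl γ
  have hsub := MeasureTheory.integral_comp_mul_left_Ioi
    (fun t => (qij / (lam + t) ^ γ) * Real.exp (-(qi * t / lam ^ γ))) 0 hlg
  rw [mul_zero, smul_eq_mul] at hsub
  have hexp : ∀ s : ℝ, qi * (lam ^ γ * s) / lam ^ γ = qi * s := fun s => by
    field_simp
  calc (∫ s in Ioi (0:ℝ), g lam s)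
      = ∫ s in Ioi (0:ℝ), lam ^ γ *
          ((qij / (lam + lam ^ γ * s) ^ γ) * Real.exp (-(qi * (lam ^ γ * s) / lam ^ γ))) := by
        simp_rw [hexp]; rfl
    _ = lam ^ γ * ∫ s in Ioi (0:ℝ),
          (qij / (lam + lam ^ γ * s) ^ γ) * Real.exp (-(qi * (lam ^ γ * s) / lam ^ γ)) :=
        MeasureTheory.integral_const_mul _ _
    _ = lam ^ γ * ((lam ^ γ)⁻¹ *
          ∫ t in Ioi (0:ℝ), (qij / (lam + t) ^ γ) * Real.exp (-(qi * t / lam ^ γ))) := by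
        rw [hsub]
    _ = ∫ t in Ioi (0:ℝ), (qij / (lam + t) ^ γ) * Real.exp (-(qi * t / lam ^ γ)) := by
        rw [← mul_assoc, mul_inv_cancel₀ hlg.ne', one_mul]
end
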